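/- Let n ≥ 2 and let H be a subgroup of the dihedral group DihedralGroup (2^n) of order 2^(n+1). Then H is isomorphic to the Klein four-group ZMod 2 × ZMod 2 if and only if there exists i : ZMod (2^n) such that H is the subgroup generated by the two reflections sr i and sr (i + 2^(n-1)). -/

import Mathlib

open DihedralGroup Subgroup

namespace DKF

variable {m : ℕ}

/-- The candidate Klein four subgroup `{1, r c, sr i, sr (i+c)}`. -/
def K (i c : ZMod m) (hcc : c + c = 0) : Subgroup (DihedralGroup m) where
  carrier := {1, r c, sr i, sr (i + c)}
  one_mem' := Or.inl rfl
  inv_mem' := by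
    intro x hx
    have hsq : x * x = 1 := by
      rcases hx with rfl | rfl | rfl | rfl
      · exact one_mul 1
      · rw [r_mul_r, hcc, ← one_def]
      · exact sr_mul_self _
      · exact sr_mul_self _
    rw [inv_eq_of_mul_eq_one_right hsq]
    exact hx
  mul_mem' := by
    have hnc : -c = c := neg_eq_of_add_eq_zero_left hcc
    have hs1 : ∀ a : ZMod m, a + c + c = a := fun a => by linear_combination hcc
    have hs2 : ∀ a : ZMod m, a - c = a + c := fun a => by linear_combination - hcc
    intro a b ha hb
    simp only [Set.mem_insert_iff, Set.mem_singleton_iff] at ha hb ⊢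
    rcases ha with rfl | rfl | rfl | rfl <;> rcases hb with rfl | rfl | rfl | rfl <;>
      simp only [one_mul, mul_one, r_mul_r, r_mul_sr, sr_mul_r, sr_mul_sr, one_def,
        hcc, hs1, hs2, sub_self, add_sub_cancel_right, add_sub_cancel_left, add_zero,
        zero_add, sub_zero,
        sub_add_cancel_left, hnc] <;>
      tauto

lemma mem_K_iff (i c : ZMod m) (hcc : c + c = 0) (x : DihedralGroup m) :
    x ∈ K i c hcc ↔ x = 1 ∨ x = r c ∨ x = sr i ∨ x = sr (i + c) := by
  rfl

lemma closure_eq_K (i c : ZMod m) (hcc : c + c = 0) :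
    closure {sr i, sr (i + c)} = K i c hcc := by
  apply le_antisymm
  · rw [closure_le]
    intro x hx
    rcases hx with rfl | hx
    · exact Or.inr (Or.inr (Or.inl rfl))
    · rw [Set.mem_singleton_iff] at hx; subst hx
      exact Or.inr (Or.inr (Or.inr rfl))
  · intro x hx
    have h1 : sr i ∈ closure ({sr i, sr (i + c)} : Set (DihedralGroup m)) :=
      subset_closure (Or.inl rfl)
    have h2 : sr (i + c) ∈ closure ({sr i, sr (i + c)} : Set (DihedralGroup m)) :=
      subset_closure (Or.inr rfl)
    have h3 : r c ∈ closure ({sr i, sr (i + c)} : Set (DihedralGroup m)) := by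
      have := mul_mem h1 h2
      rwa [sr_mul_sr, add_sub_cancel_left] at this
    rcases hx with rfl | rfl | rfl | rfl
    · exact one_mem _
    · exact h3
    · exact h1
    · exact h2

lemma card_K (i c : ZMod m) (hcc : c + c = 0) (hc0 : c ≠ 0) :
    Nat.card (K i c hcc) = 4 := by
  have h1 : (1 : DihedralGroup m) ∉ ({r c, sr i, sr (i + c)} : Set (DihedralGroup m)) := by
    simp [one_def, hc0.symm, -r_zero]
  have h2 : r c ∉ ({sr i, sr (i + c)} : Set (DihedralGroup m)) := by simp
  have h3 : sr i ≠ sr (i + c) := by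
    simp only [ne_eq, sr.injEq]
    intro h
    exact hc0 (by linear_combination -h)
  have : Nat.card (K i c hcc) = ({1, r c, sr i, sr (i + c)} :
      Set (DihedralGroup m)).ncard := by
    rw [← Nat.card_coe_set_eq]
    rfl
  rw [this, Set.ncard_insert_of_notMem h1, Set.ncard_insert_of_notMem h2,
    Set.ncard_pair h3]

lemma sq_eq_one_of_mem_K {i c : ZMod m} {hcc : c + c = 0} {x : DihedralGroup m}
    (hx : x ∈ K i c hcc) : x ^ 2 = 1 := by
  rcases hx with rfl | rfl | rfl | rfl
  · exact one_pow 2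
  · rw [sq, r_mul_r, hcc, ← one_def]
  · rw [sq, sr_mul_self]
  · rw [sq, sr_mul_self]

lemma exponent_K (i c : ZMod m) (hcc : c + c = 0) (hc0 : c ≠ 0) :
    Monoid.exponent (K i c hcc) = 2 := by
  have hdvd : Monoid.exponent (K i c hcc) ∣ 2 := by
    apply Monoid.exponent_dvd_of_forall_pow_eq_one
    rintro ⟨g, hg⟩
    ext
    exact sq_eq_one_of_mem_K hg
  rcases (Nat.dvd_prime Nat.prime_two).mp hdvd with h1 | h2
  · exfalso
    have hmem : sr i ∈ K i c hcc := Or.inr (Or.inr (Or.inl rfl))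
    have := Monoid.pow_exponent_eq_one (⟨sr i, hmem⟩ : K i c hcc)
    rw [h1, pow_one] at this
    have : sr i = (1 : DihedralGroup m) := congrArg Subtype.val this
    simp [one_def, -r_zero] at this
  · exact h2

end DKF

section Main

variable {n : ℕ}

lemma pow_pred_add_self (hn : 1 ≤ n) :
    ((2 : ZMod (2 ^ n)) ^ (n - 1) + (2 : ZMod (2 ^ n)) ^ (n - 1)) = 0 := by
  have h : (2 : ℕ) ^ (n - 1) + 2 ^ (n - 1) = 2 ^ n := by
    rw [← two_mul, ← pow_succ']
    congr 1
    omega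
  have h0 : ((2 ^ (n - 1) + 2 ^ (n - 1) : ℕ) : ZMod (2 ^ n)) = 0 := by
    rw [h]; exact ZMod.natCast_self _
  push_cast at h0
  exact h0

lemma pow_pred_ne_zero (hn : 1 ≤ n) : ((2 : ZMod (2 ^ n)) ^ (n - 1)) ≠ 0 := by
  intro hzero
  have hcast : ((2 ^ (n - 1) : ℕ) : ZMod (2 ^ n)) = 0 := by push_cast; exact hzero
  have hdvd := (ZMod.natCast_eq_zero_iff _ _).mp hcast
  have h1 := Nat.le_of_dvd (by positivity) hdvd
  have h2 : (2 : ℕ) ^ (n - 1) < 2 ^ n := Nat.pow_lt_pow_right one_lt_two (by omega)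
  omega

lemma eq_zero_or_half (hn : 1 ≤ n) (a : ZMod (2 ^ n)) (h : a + a = 0) :
    a = 0 ∨ a = (2 : ZMod (2 ^ n)) ^ (n - 1) := by
  haveI : NeZero ((2 : ℕ) ^ n) := ⟨by positivity⟩
  have hva : ((a.val : ℕ) : ZMod (2 ^ n)) = a := ZMod.natCast_rightInverse a
  have h0 : ((a.val + a.val : ℕ) : ZMod (2 ^ n)) = 0 := by
    push_cast [hva]
    exact h
  rw [ZMod.natCast_eq_zero_iff] at h0
  have h2 : (2 : ℕ) ^ n = 2 * 2 ^ (n - 1) := by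
    rw [← pow_succ']; congr 1; omega
  obtain ⟨t, ht⟩ := h0
  have hlt : a.val < 2 ^ n := ZMod.val_lt a
  have hP : 0 < (2 : ℕ) ^ n := by positivity
  have ht2 : t < 2 := by
    rcases Nat.lt_or_ge t 2 with h | h
    · exact h
    · exfalso
      have : (2 : ℕ) ^ n * 2 ≤ 2 ^ n * t := Nat.mul_le_mul_left _ h
      omega
  interval_cases t
  · left
    have hv0 : a.val = 0 := by omega
    rw [← hva, hv0]
    simp
  · right
    have hvM : a.val = 2 ^ (n - 1) := by omega
    rw [← hva, hvM]
    push_cast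
    ring

end Main

/-- A subgroup of `DihedralGroup (2^n)` (`n ≥ 2`) is isomorphic to the Klein four-group
iff it is generated by two reflections `sr i` and `sr (i + 2^(n-1))`. -/
theorem dihedral_klein_four_subgroup_iff (n : ℕ) (hn : 2 ≤ n)
    (H : Subgroup (DihedralGroup (2 ^ n))) :
    Nonempty (H ≃* Multiplicative (ZMod 2 × ZMod 2)) ↔
      ∃ i : ZMod (2 ^ n),
        H = Subgroup.closure {sr i, sr (i + (2 ^ (n - 1) : ZMod (2 ^ n)))} := by
  have hn1 : 1 ≤ n := by omega
  set c : ZMod (2 ^ n) := (2 : ZMod (2 ^ n)) ^ (n - 1) with hc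
  have hcc : c + c = 0 := pow_pred_add_self hn1
  have hc0 : c ≠ 0 := pow_pred_ne_zero hn1
  constructor
  · rintro ⟨e⟩
    have hcard : Nat.card H = 4 := by
      rw [Nat.card_congr e.toEquiv]
      exact IsKleinFour.card_four
    have hexp : Monoid.exponent H = 2 := by
      rw [Monoid.exponent_eq_of_mulEquiv e]
      exact IsKleinFour.exponent_two
    have hsq : ∀ x ∈ H, x ^ 2 = 1 := by
      intro x hx
      have := Subgroup.pow_exponent_eq_one hx
      rwa [hexp] at this
    -- H contains a reflection
    have hrefl : ∃ j, sr j ∈ H := by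
      by_contra hno
      push_neg at hno
      have hsub : (H : Set (DihedralGroup (2 ^ n))) ⊆ {1, r c} := by
        intro x hx
        cases x with
        | r a =>
          have h2 := hsq _ hx
          rw [sq, r_mul_r, one_def, r.injEq] at h2
          rcases eq_zero_or_half hn1 a h2 with rfl | rfl
          · exact Or.inl (one_def).symm
          · exact Or.inr rfl
        | sr a => exact absurd hx (hno a)
      have hle := Set.ncard_le_ncard hsub (Set.toFinite _)
      have h1 : (H : Set (DihedralGroup (2 ^ n))).ncard = 4 := by
        rw [← Nat.card_coe_set_eq]
        simpa using hcard
      have h2 : ({1, r c} : Set (DihedralGroup (2 ^ n))).ncard ≤ 2 := by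
        apply le_trans (Set.ncard_insert_le _ _)
        simp
      omega
    obtain ⟨j, hj⟩ := hrefl
    refine ⟨j, ?_⟩
    rw [DKF.closure_eq_K j c hcc]
    -- H ≤ K
    have hle : H ≤ DKF.K j c hcc := by
      intro x hx
      cases x with
      | r a =>
        have h2 := hsq _ hx
        rw [sq, r_mul_r, one_def, r.injEq] at h2
        rcases eq_zero_or_half hn1 a h2 with rfl | rfl
        · exact Or.inl (one_def).symm
        · exact Or.inr (Or.inl rfl)
      | sr b =>
        have hmul : r (b - j) ∈ H := by
          have := mul_mem hj hx
          rwa [sr_mul_sr] at this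
        have h2 := hsq _ hmul
        rw [sq, r_mul_r, one_def, r.injEq] at h2
        rcases eq_zero_or_half hn1 _ h2 with h0 | h0
        · have : b = j := by linear_combination h0
          subst this
          exact Or.inr (Or.inr (Or.inl rfl))
        · have : b = j + c := by rw [hc]; linear_combination h0
          subst this
          exact Or.inr (Or.inr (Or.inr rfl))
    -- equality via cardinality
    apply SetLike.coe_injective
    apply (Set.eq_of_subset_of_ncard_le hle ?_ (Set.toFinite _))
    have hK : ((DKF.K j c hcc : Subgroup (DihedralGroup (2 ^ n))) :
        Set (DihedralGroup (2 ^ n))).ncard = 4 := by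
      rw [← Nat.card_coe_set_eq]
      simpa using DKF.card_K j c hcc hc0
    have hH : (H : Set (DihedralGroup (2 ^ n))).ncard = 4 := by
      rw [← Nat.card_coe_set_eq]
      simpa using hcard
    omega
  · rintro ⟨i, rfl⟩
    rw [DKF.closure_eq_K i c hcc]
    haveI : IsKleinFour (DKF.K i c hcc) :=
      ⟨DKF.card_K i c hcc hc0, DKF.exponent_K i c hcc hc0⟩
    exact IsKleinFour.nonempty_mulEquiv
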